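/- Let n ≥ 2 be an integer and let λ_1 ≥ λ_2 ≥ … ≥ λ_{2n} ≥ 0 be reals with ∑_{i=1}^{2n} λ_i = 1. Then the matrix ρ'_Λ satisfies: (i) ρ'_Λ is positive semidefinite and has trace 1; (ii) its characteristic polynomial is ∏_{i=1}^{2n} (x − λ_i), i.e., its spectrum is exactly {λ_1,…,λ_{2n}}; and (iii) ρ'_Λ is an X-matrix with parameters a_1 = b_1 = (λ_1+λ_{n+1})/2, r_1 = (λ_1−λ_{n+1})/2, a_j = λ_j, b_j = λ_{2n+2−j}, r_j = 0 for 2 ≤ j ≤ n, and for these parameters the value 2·max{0, max_{k∈[1,n]} ( r_k − ∑_{j≠k} √(a_j b_j) )} equals max{0, λ_1 − λ_{n+1} − 2·∑_{ℓ=2}^n √(λ_ℓ·λ_{2n+2−ℓ})}. Hence the upper bound max{0, λ_1 − λ_{n+1} − 2·∑_{ℓ=2}^n √(λ_ℓ λ_{2n+2−ℓ})} on the GM-concurrence of X-states with spectrum λ is attained. -/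
import Mathlib


open Polynomial

/-- The `2n × 2n` complex X-matrix with parameters `(a k, b k, r k, φ k)` for `k = 0, …, n-1`
(0-based version of the parameters `(a_k, b_k, r_k, φ_k)_{k=1}^n`):
its diagonal entries are `a_0, …, a_{n-1}, b_{n-1}, …, b_0`, and its antidiagonal entries
pair position `k` with position `2n-1-k`, carrying `r_k e^{i φ_k}` (row `k < n`) and
`r_k e^{-i φ_k}` (row `2n-1-k`); all other entries vanish. -/
noncomputable def XMat (n : ℕ) (a b r φ : ℕ → ℝ) :
    Matrix (Fin (2 * n)) (Fin (2 * n)) ℂ :=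
  Matrix.of fun i j =>
    if i = j then
      (if i.val < n then ((a i.val : ℝ) : ℂ) else ((b (2 * n - 1 - i.val) : ℝ) : ℂ))
    else if i.val + j.val = 2 * n - 1 then
      (if i.val < n then
        ((r i.val : ℝ) : ℂ) * Complex.exp (Complex.I * ((φ i.val : ℝ) : ℂ))
      else
        ((r (2 * n - 1 - i.val) : ℝ) : ℂ) *
          Complex.exp (-(Complex.I * ((φ (2 * n - 1 - i.val) : ℝ) : ℂ))))
    else 0

/-- The X-matrix `ρ'_Λ` built from a spectrum `lam` (0-based: `λ_k = lam (k-1)`): diagonal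
`(λ_1+λ_{n+1})/2, λ_2, …, λ_n, λ_{n+2}, …, λ_{2n}, (λ_1+λ_{n+1})/2` and corner antidiagonal
entries `(λ_1-λ_{n+1})/2`. -/
noncomputable def rhoPrime (n : ℕ) (lam : ℕ → ℝ) :
    Matrix (Fin (2 * n)) (Fin (2 * n)) ℝ :=
  Matrix.of fun i j =>
    if (i.val = 0 ∧ j.val = 0) ∨ (i.val = 2 * n - 1 ∧ j.val = 2 * n - 1) then
      (lam 0 + lam n) / 2
    else if (i.val = 0 ∧ j.val = 2 * n - 1) ∨ (i.val = 2 * n - 1 ∧ j.val = 0) then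
      (lam 0 - lam n) / 2
    else if i = j ∧ 1 ≤ i.val ∧ i.val ≤ n - 1 then lam i.val
    else if i = j ∧ n ≤ i.val ∧ i.val ≤ 2 * n - 2 then lam (i.val + 1)
    else 0

namespace RhoAux

noncomputable def cc : ℝ := Real.sqrt 2 / 2

lemma cc_mul_cc : cc * cc = 1 / 2 := by
  unfold cc
  rw [div_mul_div_comm, Real.mul_self_sqrt (by norm_num : (0:ℝ) ≤ 2)]
  norm_num

noncomputable def Qm (n : ℕ) : Matrix (Fin (2 * n)) (Fin (2 * n)) ℝ :=
  Matrix.of fun i j =>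
    if i.val = 0 ∧ j.val = 0 then cc
    else if i.val = 0 ∧ j.val = 2 * n - 1 then cc
    else if i.val = 2 * n - 1 ∧ j.val = 0 then cc
    else if i.val = 2 * n - 1 ∧ j.val = 2 * n - 1 then -cc
    else if i = j then 1 else 0

variable {n : ℕ}

lemma Qm_row_z (hn : 2 ≤ n) (x : Fin (2 * n)) :
    Qm n ⟨0, by omega⟩ x = if x.val = 0 ∨ x.val = 2 * n - 1 then cc else 0 := by
  simp only [Qm, Matrix.of_apply, Fin.ext_iff, Fin.val_mk, true_and, and_true, false_and,
    and_false, if_true, if_false]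
  split_ifs <;> first | rfl | omega | (exfalso; omega)

lemma Qm_row_m (hn : 2 ≤ n) (x : Fin (2 * n)) :
    Qm n ⟨2 * n - 1, by omega⟩ x =
      if x.val = 0 then cc else if x.val = 2 * n - 1 then -cc else 0 := by
  simp only [Qm, Matrix.of_apply, Fin.ext_iff, Fin.val_mk, true_and, and_true, false_and,
    and_false, if_true, if_false]
  split_ifs <;> first | rfl | omega | (exfalso; omega)

lemma Qm_row_mid (hn : 2 ≤ n) {i : Fin (2 * n)} (h0 : i.val ≠ 0) (h1 : i.val ≠ 2 * n - 1)
    (x : Fin (2 * n)) : Qm n i x = if i = x then 1 else 0 := by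
  simp only [Qm, Matrix.of_apply, Fin.ext_iff]
  split_ifs <;> first | rfl | omega | (exfalso; omega)

lemma QdQ (hn : 2 ≤ n) (d : ℕ → ℝ) :
    Qm n * Matrix.diagonal (fun i : Fin (2 * n) => d i.val) * Qm n =
      Matrix.of fun i j =>
        if (i.val = 0 ∧ j.val = 0) ∨ (i.val = 2 * n - 1 ∧ j.val = 2 * n - 1) then
          (d 0 + d (2 * n - 1)) / 2
        else if (i.val = 0 ∧ j.val = 2 * n - 1) ∨ (i.val = 2 * n - 1 ∧ j.val = 0) then
          (d 0 - d (2 * n - 1)) / 2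
        else if i = j then d i.val
        else 0 := by
  set z : Fin (2 * n) := ⟨0, by omega⟩ with hzdef
  set m : Fin (2 * n) := ⟨2 * n - 1, by omega⟩ with hmdef
  have hzv : z.val = 0 := rfl
  have hmv : m.val = 2 * n - 1 := rfl
  have hzm : z ≠ m := by
    intro h
    have := congrArg Fin.val h
    rw [hzv, hmv] at this
    omega
  ext i j
  rw [Matrix.mul_assoc, Matrix.mul_apply]
  simp only [Matrix.diagonal_mul, Matrix.of_apply]
  have htri : ∀ x : Fin (2 * n), x = z ∨ x = m ∨ (x.val ≠ 0 ∧ x.val ≠ 2 * n - 1) := by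
    intro x
    rcases eq_or_ne x.val 0 with h | h
    · exact Or.inl (Fin.ext h)
    · rcases eq_or_ne x.val (2 * n - 1) with h2 | h2
      · exact Or.inr (Or.inl (Fin.ext h2))
      · exact Or.inr (Or.inr ⟨h, h2⟩)
  rcases htri i with hi | hi | hi
  · -- i = z
    subst hi
    have hsupp : ∀ x : Fin (2 * n), x ≠ z ∧ x ≠ m →
        Qm n z x * (d x.val * Qm n x j) = 0 := by
      rintro x ⟨hx1, hx2⟩
      rw [Qm_row_z hn x, if_neg, zero_mul]
      rintro (h | h)
      · exact hx1 (Fin.ext h)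
      · exact hx2 (Fin.ext h)
    rw [Fintype.sum_eq_add z m hzm hsupp]
    rw [Qm_row_z hn z, Qm_row_z hn m, if_pos (Or.inl hzv), if_pos (Or.inr hmv)]
    rcases htri j with hj | hj | hj
    · subst hj
      rw [Qm_row_z hn z, Qm_row_m hn z, if_pos (Or.inl hzv), if_pos hzv,
        if_pos (Or.inl ⟨hzv, hzv⟩)]
      linear_combination (d 0 + d (2 * n - 1)) * cc_mul_cc
    · subst hj
      rw [Qm_row_z hn m, Qm_row_m hn m, if_pos (Or.inr hmv), if_neg (by omega),
        if_pos hmv, if_neg (by simp only [hzv, hmv]; omega), if_pos (Or.inl ⟨hzv, hmv⟩)]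
      linear_combination (d 0 - d (2 * n - 1)) * cc_mul_cc
    · rw [Qm_row_z hn j, Qm_row_m hn j, if_neg (by omega), if_neg hj.1, if_neg hj.2,
        if_neg (by simp only [hzv]; omega), if_neg (by simp only [hzv]; omega),
        if_neg (by intro h; exact hj.1 (by rw [← h, hzv]))]
      ring
  · -- i = m
    subst hi
    have hsupp : ∀ x : Fin (2 * n), x ≠ z ∧ x ≠ m →
        Qm n m x * (d x.val * Qm n x j) = 0 := by
      rintro x ⟨hx1, hx2⟩
      rw [Qm_row_m hn x, if_neg (fun h => hx1 (Fin.ext h)),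
        if_neg (fun h => hx2 (Fin.ext h)), zero_mul]
    rw [Fintype.sum_eq_add z m hzm hsupp]
    rw [Qm_row_m hn z, Qm_row_m hn m, if_pos hzv, if_neg (by omega), if_pos hmv]
    rcases htri j with hj | hj | hj
    · subst hj
      rw [Qm_row_z hn z, Qm_row_m hn z, if_pos (Or.inl hzv), if_pos hzv,
        if_neg (by simp only [hzv, hmv]; omega), if_pos (Or.inr ⟨hmv, hzv⟩)]
      linear_combination (d 0 - d (2 * n - 1)) * cc_mul_cc
    · subst hj
      rw [Qm_row_z hn m, Qm_row_m hn m, if_pos (Or.inr hmv), if_neg (by omega),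
        if_pos hmv, if_pos (Or.inr ⟨hmv, hmv⟩)]
      linear_combination (d 0 + d (2 * n - 1)) * cc_mul_cc
    · rw [Qm_row_z hn j, Qm_row_m hn j, if_neg (by omega), if_neg hj.1, if_neg hj.2,
        if_neg (by simp only [hmv]; omega), if_neg (by simp only [hmv]; omega),
        if_neg (by intro h; exact hj.2 (by rw [← h, hmv]))]
      ring
  · -- i middle
    have hsupp : ∀ x : Fin (2 * n), x ≠ i → Qm n i x * (d x.val * Qm n x j) = 0 := by
      intro x hx
      rw [Qm_row_mid hn hi.1 hi.2 x, if_neg (fun h => hx h.symm), zero_mul]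
    rw [Fintype.sum_eq_single i hsupp, Qm_row_mid hn hi.1 hi.2 i, if_pos rfl,
      Qm_row_mid hn hi.1 hi.2 j]
    by_cases hij : i = j
    · subst hij
      rw [if_pos rfl, if_neg (by omega), if_neg (by omega), if_pos rfl]
      ring
    · rw [if_neg hij, if_neg (by omega), if_neg (by omega), if_neg hij]
      ring


lemma QmQm (hn : 2 ≤ n) : Qm n * Qm n = 1 := by
  have h := QdQ hn (fun _ => (1:ℝ))
  rw [show Matrix.diagonal (fun i : Fin (2*n) => (fun _ : ℕ => (1:ℝ)) i.val) = 1 from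
    Matrix.diagonal_one, Matrix.mul_one] at h
  rw [h]
  ext i j
  simp only [Matrix.of_apply, Matrix.one_apply, Fin.ext_iff]
  split_ifs <;> first | (exfalso; omega) | norm_num

lemma QmH : (Qm n).conjTranspose = Qm n := by
  ext i j
  simp only [Matrix.conjTranspose_apply, star_trivial, Qm, Matrix.of_apply, Fin.ext_iff]
  split_ifs <;> first | rfl | (exfalso; omega)

lemma conj_charpoly {N : Type*} [Fintype N] [DecidableEq N] (Q A : Matrix N N ℝ)
    (hQ : Q * Q = 1) : (Q * A * Q).charpoly = A.charpoly := by
  set Q' : Matrix N N (Polynomial ℝ) := Q.map (C : ℝ →+* Polynomial ℝ) with hQ'def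
  have hQ' : Q' * Q' = 1 := by
    rw [hQ'def, ← Matrix.map_mul, hQ, Matrix.map_one _ (map_zero _) (map_one _)]
  have hsc : Q' * Matrix.scalar N (X : ℝ[X]) * Q' = Matrix.scalar N (X : ℝ[X]) := by
    have hcomm : Q' * Matrix.diagonal (fun _ => (X:ℝ[X])) =
        Matrix.diagonal (fun _ => (X:ℝ[X])) * Q' := by
      refine Matrix.ext fun i j => ?_
      rw [Matrix.mul_diagonal, Matrix.diagonal_mul, mul_comm]
    rw [Matrix.scalar_apply, hcomm, Matrix.mul_assoc, hQ', Matrix.mul_one]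
  have key : Matrix.charmatrix (Q * A * Q) = Q' * Matrix.charmatrix A * Q' := by
    show Matrix.scalar N (X : ℝ[X]) - (C : ℝ →+* Polynomial ℝ).mapMatrix (Q * A * Q) = _
    rw [RingHom.mapMatrix_apply, Matrix.map_mul, Matrix.map_mul]
    show _ = Q' * (Matrix.scalar N (X : ℝ[X]) - (C : ℝ →+* Polynomial ℝ).mapMatrix A) * Q'
    rw [RingHom.mapMatrix_apply, Matrix.mul_sub, Matrix.sub_mul, hsc, hQ'def]
  rw [Matrix.charpoly, Matrix.charpoly, key, Matrix.det_mul, Matrix.det_mul]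
  have hdet : Q'.det * Q'.det = 1 := by rw [← Matrix.det_mul, hQ', Matrix.det_one]
  calc Q'.det * (Matrix.charmatrix A).det * Q'.det
      = Q'.det * Q'.det * (Matrix.charmatrix A).det := by ring
    _ = (Matrix.charmatrix A).det := by rw [hdet, one_mul]

lemma charpoly_diag {N : Type*} [Fintype N] [DecidableEq N] (d : N → ℝ) :
    (Matrix.diagonal d).charpoly = ∏ i, (X - C (d i)) := by
  have h : Matrix.charmatrix (Matrix.diagonal d) =
      Matrix.diagonal (fun i => (X : ℝ[X]) - C (d i)) := by
    refine Matrix.ext fun i j => ?_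
    by_cases hij : i = j
    · subst hij
      simp [Matrix.charmatrix_apply_eq]
    · rw [Matrix.charmatrix_apply_ne _ _ _ hij, Matrix.diagonal_apply_ne _ hij,
        Matrix.diagonal_apply_ne _ hij, map_zero, neg_zero]
  rw [Matrix.charpoly, h, Matrix.det_diagonal]

noncomputable def dN (n : ℕ) (lam : ℕ → ℝ) : ℕ → ℝ := fun i =>
  if i = 0 then lam 0 else if i = 2 * n - 1 then lam n
  else if i < n then lam i else lam (i + 1)

lemma reindex_prod {M : Type*} [CommMonoid M] (hn : 2 ≤ n) (lam : ℕ → ℝ) (G : ℝ → M) :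
    ∏ i ∈ Finset.range (2 * n), G (dN n lam i) = ∏ i ∈ Finset.range (2 * n), G (lam i) := by
  refine Finset.prod_nbij' (fun i => if i = 2 * n - 1 then n else if i < n then i else i + 1)
    (fun j => if j = n then 2 * n - 1 else if j < n then j else j - 1)
    ?_ ?_ ?_ ?_ ?_ <;>
      intro a ha <;> simp only [Finset.mem_range] at ha ⊢
  · split_ifs <;> omega
  · split_ifs <;> omega
  · split_ifs <;> omega
  · split_ifs <;> omega
  · congr 1
    unfold dN
    split_ifs <;> first | rfl | (exfalso; omega) | (congr 1; omega)

lemma reindex_sum (hn : 2 ≤ n) (lam : ℕ → ℝ) :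
    ∑ i ∈ Finset.range (2 * n), dN n lam i = ∑ i ∈ Finset.range (2 * n), lam i := by
  refine Finset.sum_nbij' (fun i => if i = 2 * n - 1 then n else if i < n then i else i + 1)
    (fun j => if j = n then 2 * n - 1 else if j < n then j else j - 1)
    ?_ ?_ ?_ ?_ ?_ <;>
      intro a ha <;> simp only [Finset.mem_range] at ha ⊢
  · split_ifs <;> omega
  · split_ifs <;> omega
  · split_ifs <;> omega
  · split_ifs <;> omega
  · unfold dN
    split_ifs <;> first | rfl | (exfalso; omega) | (congr 1; omega)

end RhoAux


/-- For any sorted spectrum `λ_1 ≥ … ≥ λ_{2n} ≥ 0` summing to `1` (0-based `lam`), the matrix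
`ρ'_Λ` is positive semidefinite with trace `1`, has characteristic polynomial
`∏_{i=1}^{2n} (x - λ_i)`, is the X-matrix with parameters `a_1 = b_1 = (λ_1+λ_{n+1})/2`,
`r_1 = (λ_1-λ_{n+1})/2`, `a_j = λ_j`, `b_j = λ_{2n+2-j}`, `r_j = 0` (`2 ≤ j ≤ n`, phases `0`),
and for these parameters `2·max{0, max_k (r_k - ∑_{j≠k} √(a_j b_j))}` equals
`max{0, λ_1 - λ_{n+1} - 2 ∑_{ℓ=2}^n √(λ_ℓ λ_{2n+2-ℓ})}`: the GM-concurrence bound is attained. -/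
theorem rhoPrime_is_XMEMS (n : ℕ) (hn : 2 ≤ n) (lam : ℕ → ℝ)
    (hsort : ∀ i j, i ≤ j → j < 2 * n → lam j ≤ lam i)
    (hpos : ∀ i < 2 * n, 0 ≤ lam i)
    (hsum : ∑ i ∈ Finset.range (2 * n), lam i = 1) :
    (rhoPrime n lam).PosSemidef ∧
    (rhoPrime n lam).trace = 1 ∧
    (rhoPrime n lam).charpoly =
      ∏ i ∈ Finset.range (2 * n), (Polynomial.X - Polynomial.C (lam i)) ∧
    (rhoPrime n lam).map (fun x => (x : ℂ)) =
      XMat n (fun j => if j = 0 then (lam 0 + lam n) / 2 else lam j)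
            (fun j => if j = 0 then (lam 0 + lam n) / 2 else lam (2 * n - j))
            (fun j => if j = 0 then (lam 0 - lam n) / 2 else 0)
            (fun _ => 0) ∧
    2 * max 0 ((Finset.range n).sup' (Finset.nonempty_range_iff.mpr (by omega))
        (fun k => (if k = 0 then (lam 0 - lam n) / 2 else 0) -
          ∑ j ∈ (Finset.range n).erase k,
            Real.sqrt ((if j = 0 then (lam 0 + lam n) / 2 else lam j) *
              (if j = 0 then (lam 0 + lam n) / 2 else lam (2 * n - j))))) =
      max 0 (lam 0 - lam n -
        2 * ∑ ℓ ∈ Finset.Ico 1 n, Real.sqrt (lam ℓ * lam (2 * n - ℓ))) := by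
  have hQQ := RhoAux.QmQm (n := n) hn
  have hrho : rhoPrime n lam =
      RhoAux.Qm n * Matrix.diagonal (fun i : Fin (2 * n) => RhoAux.dN n lam i.val) *
        RhoAux.Qm n := by
    rw [RhoAux.QdQ hn (RhoAux.dN n lam)]
    refine Matrix.ext fun i j => ?_
    have hilt := i.isLt
    have hjlt := j.isLt
    have h1 : RhoAux.dN n lam 0 = lam 0 := by unfold RhoAux.dN; simp
    have h2 : RhoAux.dN n lam (2 * n - 1) = lam n := by
      unfold RhoAux.dN; rw [if_neg (by omega), if_pos rfl]
    simp only [rhoPrime, Matrix.of_apply, Fin.ext_iff, h1, h2]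
    split_ifs <;>
      first
        | rfl
        | (exfalso; omega)
        | (unfold RhoAux.dN; split_ifs <;> first | rfl | (exfalso; omega) | (congr 1; omega))
        | (congr 1; omega)
  have hpsd : (rhoPrime n lam).PosSemidef := by
    have hDpsd : (Matrix.diagonal (fun i : Fin (2 * n) => RhoAux.dN n lam i.val)).PosSemidef := by
      refine Matrix.posSemidef_diagonal_iff.mpr fun i => ?_
      have hilt := i.isLt
      unfold RhoAux.dN
      split_ifs <;> exact hpos _ (by omega)
    have h := hDpsd.mul_mul_conjTranspose_same (RhoAux.Qm n)
    rwa [RhoAux.QmH, ← hrho] at h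
  have htr : (rhoPrime n lam).trace = 1 := by
    rw [hrho, Matrix.trace_mul_comm
        (RhoAux.Qm n * Matrix.diagonal (fun i : Fin (2 * n) => RhoAux.dN n lam i.val))
        (RhoAux.Qm n),
      ← Matrix.mul_assoc, hQQ, Matrix.one_mul, Matrix.trace_diagonal]
    rw [Fin.sum_univ_eq_sum_range (fun i => RhoAux.dN n lam i) (2 * n),
      RhoAux.reindex_sum hn lam, hsum]
  have hcp : (rhoPrime n lam).charpoly =
      ∏ i ∈ Finset.range (2 * n), (Polynomial.X - Polynomial.C (lam i)) := by
    rw [hrho, RhoAux.conj_charpoly _ _ hQQ, RhoAux.charpoly_diag,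
      Fin.prod_univ_eq_prod_range
        (fun i => (Polynomial.X : Polynomial ℝ) - Polynomial.C (RhoAux.dN n lam i)) (2 * n)]
    exact RhoAux.reindex_prod hn lam
      (fun t => (Polynomial.X : Polynomial ℝ) - Polynomial.C t)
  have hX : (rhoPrime n lam).map (fun x => (x : ℂ)) =
      XMat n (fun j => if j = 0 then (lam 0 + lam n) / 2 else lam j)
            (fun j => if j = 0 then (lam 0 + lam n) / 2 else lam (2 * n - j))
            (fun j => if j = 0 then (lam 0 - lam n) / 2 else 0)
            (fun _ => 0) := by
    refine Matrix.ext fun i j => ?_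
    have hilt := i.isLt
    have hjlt := j.isLt
    simp only [rhoPrime, XMat, Matrix.map_apply, Matrix.of_apply, Fin.ext_iff,
      Complex.ofReal_zero, mul_zero, Complex.exp_zero, mul_one, neg_zero]
    split_ifs <;>
      first
        | rfl
        | (exfalso; omega)
        | (push_cast; ring1)
        | (norm_cast; congr 1; omega)
        | (congr 1; congr 1; omega)
  refine ⟨hpsd, htr, hcp, hX, ?_⟩
  set F : ℕ → ℝ := fun k => (if k = 0 then (lam 0 - lam n) / 2 else 0) -
      ∑ j ∈ (Finset.range n).erase k,
        Real.sqrt ((if j = 0 then (lam 0 + lam n) / 2 else lam j) *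
          (if j = 0 then (lam 0 + lam n) / 2 else lam (2 * n - j))) with hF
  have h0mem : (0 : ℕ) ∈ Finset.range n := Finset.mem_range.mpr (by omega)
  have hF0 : F 0 = (lam 0 - lam n) / 2 -
      ∑ ℓ ∈ Finset.Ico 1 n, Real.sqrt (lam ℓ * lam (2 * n - ℓ)) := by
    simp only [hF]
    congr 1
    rw [show (Finset.range n).erase 0 = Finset.Ico 1 n from by
      ext x; simp [Finset.mem_Ico]; omega]
    refine Finset.sum_congr rfl fun j hj => ?_
    have hj0 : j ≠ 0 := by rw [Finset.mem_Ico] at hj; omega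
    rw [if_neg hj0, if_neg hj0]
  have hFk : ∀ k ∈ Finset.range n, F k ≤ max 0 (F 0) := by
    intro k hk
    by_cases hk0 : k = 0
    · subst hk0; exact le_max_right _ _
    · refine le_trans ?_ (le_max_left _ _)
      simp only [hF]
      rw [if_neg hk0, zero_sub]
      exact neg_nonpos.mpr (Finset.sum_nonneg fun j _ => Real.sqrt_nonneg _)
  have hsup : max 0 ((Finset.range n).sup'
      (Finset.nonempty_range_iff.mpr (by omega)) F) = max 0 (F 0) :=
    le_antisymm (max_le (le_max_left _ _) (Finset.sup'_le _ _ hFk))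
      (max_le (le_max_left _ _) ((Finset.le_sup' F h0mem).trans (le_max_right _ _)))
  rw [hsup, hF0, mul_max_of_nonneg _ _ (by norm_num : (0:ℝ) ≤ 2), mul_zero]
  congr 1
  ring
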